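/- arXiv:2111.03626 — 2 statements merged into one kernel-verified Lean document; each statement's English description precedes it below -/
import Mathlib

section
/- For any real numbers u and v, ρ_τ(u − v) − ρ_τ(u) = −v·ψ_τ(u) + ∫₀ᵛ (1{u ≤ s} − 1{u ≤ 0}) ds, where ρ_τ(u) = u(τ − 1{u ≤ 0}) is the quantile check function and ψ_τ(u) = τ − 1{u ≤ 0}. -/
open MeasureTheory Set

lemma knight_indicator_eq (u : ℝ) :
    (fun s : ℝ => if u ≤ s then (1:ℝ) else 0)
      = (Set.Ici u).indicator (fun _ => (1:ℝ)) := by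
  funext s
  simp [Set.indicator_apply, Set.mem_Ici]

lemma knight_intervalIntegrable (u a b : ℝ) :
    IntervalIntegrable (fun s : ℝ => if u ≤ s then (1:ℝ) else 0) volume a b := by
  rw [knight_indicator_eq]
  constructor <;>
    exact (integrableOn_const measure_Ioc_lt_top.ne).indicator measurableSet_Ici

lemma knight_integral_aux (u v : ℝ) :
    ∫ s in (0:ℝ)..v, (if u ≤ s then (1:ℝ) else 0)
      = max (v - u) 0 - max (-u) 0 := by
  rw [knight_indicator_eq]
  rcases le_total 0 v with hv | hv
  · rw [intervalIntegral.integral_of_le hv, setIntegral_indicator measurableSet_Ici,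
      setIntegral_const]
    rcases le_total u 0 with hu | hu
    · have hset : Set.Ioc 0 v ∩ Set.Ici u = Set.Ioc 0 v := by
        ext x
        simp only [Set.mem_inter_iff, Set.mem_Ioc, Set.mem_Ici]
        constructor
        · rintro ⟨h, _⟩; exact h
        · intro h; exact ⟨h, by linarith [h.1]⟩
      rw [hset, measureReal_def, Real.volume_Ioc, ENNReal.toReal_ofReal (by linarith),
        max_eq_left (by linarith : (0:ℝ) ≤ v - u), max_eq_left (by linarith : (0:ℝ) ≤ -u)]
      simp only [smul_eq_mul, mul_one]
      ring
    · rcases le_total u v with huv | huv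
      · have hvol : volume (Set.Ioc 0 v ∩ Set.Ici u) = ENNReal.ofReal (v - u) := by
          apply le_antisymm
          · refine (measure_mono (?_ : _ ⊆ Set.Icc u v)).trans_eq ?_
            · rintro x ⟨⟨_, h2⟩, h3⟩; exact ⟨h3, h2⟩
            · rw [Real.volume_Icc]
          · refine le_trans ?_ (measure_mono (?_ : Set.Ioc u v ⊆ _))
            · rw [Real.volume_Ioc]
            · rintro x ⟨h1, h2⟩; exact ⟨⟨lt_of_le_of_lt hu h1, h2⟩, le_of_lt h1⟩
        rw [measureReal_def, hvol, ENNReal.toReal_ofReal (by linarith),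
          max_eq_left (by linarith : (0:ℝ) ≤ v - u), max_eq_right (by linarith : -u ≤ (0:ℝ))]
        simp only [smul_eq_mul, mul_one]
        ring
      · have hvol : volume (Set.Ioc 0 v ∩ Set.Ici u) = 0 := by
          refine le_antisymm ?_ zero_le
          refine (measure_mono (?_ : _ ⊆ ({u} : Set ℝ))).trans_eq (by simp)
          rintro x ⟨⟨_, h2⟩, h3⟩
          have : x = u := le_antisymm (by linarith) h3
          simp [this]
        rw [measureReal_def, hvol, max_eq_right (by linarith : v - u ≤ (0:ℝ)),
          max_eq_right (by linarith : -u ≤ (0:ℝ))]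
        simp
  · rw [intervalIntegral.integral_of_ge hv, setIntegral_indicator measurableSet_Ici,
      setIntegral_const]
    rcases le_total u v with hu | hu
    · have hset : Set.Ioc v 0 ∩ Set.Ici u = Set.Ioc v 0 := by
        ext x
        simp only [Set.mem_inter_iff, Set.mem_Ioc, Set.mem_Ici]
        constructor
        · rintro ⟨h, _⟩; exact h
        · intro h; exact ⟨h, by linarith [h.1]⟩
      rw [hset, measureReal_def, Real.volume_Ioc, ENNReal.toReal_ofReal (by linarith),
        max_eq_left (by linarith : (0:ℝ) ≤ v - u), max_eq_left (by linarith : (0:ℝ) ≤ -u)]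
      simp only [smul_eq_mul, mul_one]
      ring
    · rcases le_total u 0 with hu0 | hu0
      · have hvol : volume (Set.Ioc v 0 ∩ Set.Ici u) = ENNReal.ofReal (0 - u) := by
          apply le_antisymm
          · refine (measure_mono (?_ : _ ⊆ Set.Icc u 0)).trans_eq ?_
            · rintro x ⟨⟨_, h2⟩, h3⟩; exact ⟨h3, h2⟩
            · rw [Real.volume_Icc]
          · refine le_trans ?_ (measure_mono (?_ : Set.Ioc u 0 ⊆ _))
            · rw [Real.volume_Ioc]
            · rintro x ⟨h1, h2⟩; exact ⟨⟨lt_of_le_of_lt hu h1, h2⟩, le_of_lt h1⟩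
        rw [measureReal_def, hvol, ENNReal.toReal_ofReal (by linarith),
          max_eq_right (by linarith : v - u ≤ (0:ℝ)), max_eq_left (by linarith : (0:ℝ) ≤ -u)]
        simp only [smul_eq_mul, mul_one]
        ring
      · have hvol : volume (Set.Ioc v 0 ∩ Set.Ici u) = 0 := by
          refine le_antisymm ?_ zero_le
          refine (measure_mono (?_ : _ ⊆ ({u} : Set ℝ))).trans_eq (by simp)
          rintro x ⟨⟨_, h2⟩, h3⟩
          have : x = u := le_antisymm (by linarith) h3
          simp [this]
        rw [measureReal_def, hvol, max_eq_right (by linarith : v - u ≤ (0:ℝ)),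
          max_eq_right (by linarith : -u ≤ (0:ℝ))]
        simp

/-- Knight's identity for the quantile check function. -/
theorem knight_identity (τ : ℝ) (hτ : τ ∈ Set.Ioo (0:ℝ) 1) (u v : ℝ) :
    (fun w : ℝ => w * (τ - if w ≤ 0 then 1 else 0)) (u - v)
      - (fun w : ℝ => w * (τ - if w ≤ 0 then 1 else 0)) u
    = -v * (τ - if u ≤ 0 then 1 else 0)
      + ∫ s in (0:ℝ)..v, ((if u ≤ s then (1:ℝ) else 0) - (if u ≤ 0 then 1 else 0)) := by
  have hint : (∫ s in (0:ℝ)..v, ((if u ≤ s then (1:ℝ) else 0) - (if u ≤ 0 then 1 else 0)))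
      = (max (v - u) 0 - max (-u) 0) - v * (if u ≤ 0 then 1 else 0) := by
    rw [intervalIntegral.integral_sub (knight_intervalIntegrable u 0 v)
      intervalIntegrable_const, knight_integral_aux]
    simp [mul_comm]
  rw [hint]
  simp only
  split_ifs with h1 h2 h2 <;>
    [rw [max_eq_left (by linarith : (0:ℝ) ≤ v - u), max_eq_left (by linarith : (0:ℝ) ≤ -u)];
     rw [max_eq_left (by linarith : (0:ℝ) ≤ v - u), max_eq_right (by linarith : -u ≤ (0:ℝ))];
     rw [max_eq_right (by linarith : v - u ≤ (0:ℝ)), max_eq_left (by linarith : (0:ℝ) ≤ -u)];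
     rw [max_eq_right (by linarith : v - u ≤ (0:ℝ)), max_eq_right (by linarith : -u ≤ (0:ℝ))]] <;>
    ring
end

section
/- If F is a CDF with density f satisfying f(y) ≥ f_min > 0 for all y in a neighborhood containing 0 and the relevant arguments, and Z ∈ ℝᵈ satisfies c_λ ≤ λ_min(E[ZZᵀ]), then for any vector h ∈ ℝᵈ, E[∫₀^{Zᵀh} (F(s) − F(0)) ds] ≥ (f_min·c_λ/2)·‖h‖², provided |Zᵀh| stays in the neighborhood where f ≥ f_min almost surely. -/
open MeasureTheory

lemma key_pointwise (F f : ℝ → ℝ) (fmin R t : ℝ)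
    (hF' : ∀ y, HasDerivAt F (f y) y)
    (hfR : ∀ y ∈ Set.Icc (-R) R, fmin ≤ f y)
    (ht : |t| ≤ R) :
    fmin / 2 * t ^ 2 ≤ ∫ s in (0:ℝ)..t, (F s - F 0) := by
  have hRt := abs_le.mp ht
  have hR0 : (0:ℝ) ≤ R := le_trans (abs_nonneg t) ht
  set H : ℝ → ℝ := fun s => F s - F 0 - fmin * s with hHdef
  have hH' : ∀ s, HasDerivAt H (f s - fmin) s := by
    intro s
    have h1 : HasDerivAt (fun x : ℝ => fmin * x) fmin s := by
      simpa using (hasDerivAt_id s).const_mul fmin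
    exact ((hF' s).sub_const (F 0)).sub h1
  have hHc : Continuous H :=
    continuous_iff_continuousAt.mpr fun x => (hH' x).continuousAt
  have hHmono : MonotoneOn H (Set.Icc (-R) R) := by
    apply monotoneOn_of_deriv_nonneg (convex_Icc _ _) hHc.continuousOn
    · intro x hx
      exact (hH' x).differentiableAt.differentiableWithinAt
    · intro x hx
      rw [(hH' x).deriv]
      have : x ∈ Set.Icc (-R) R := interior_subset hx
      linarith [hfR x this]
  have hH0 : H 0 = 0 := by simp [hHdef]
  have hFc : Continuous F :=
    continuous_iff_continuousAt.mpr fun x => (hF' x).continuousAt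
  have hint1 : IntervalIntegrable (fun s => F s - F 0) MeasureTheory.volume 0 t :=
    ((hFc.sub continuous_const)).intervalIntegrable 0 t
  have hint2 : IntervalIntegrable (fun s => fmin * s) MeasureTheory.volume 0 t :=
    (continuous_const.mul continuous_id).intervalIntegrable 0 t
  have hval : (∫ s in (0:ℝ)..t, fmin * s) = fmin / 2 * t ^ 2 := by
    rw [intervalIntegral.integral_const_mul, integral_id]
    ring
  rcases le_or_gt 0 t with h0t | h0t
  · have hmono : ∀ s ∈ Set.Icc (0:ℝ) t, fmin * s ≤ F s - F 0 := by
      intro s hs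
      have hs' : s ∈ Set.Icc (-R) R := ⟨by linarith [hs.1], le_trans hs.2 hRt.2⟩
      have h0' : (0:ℝ) ∈ Set.Icc (-R) R := ⟨by linarith, hR0⟩
      have := hHmono h0' hs' hs.1
      rw [hH0] at this
      simp only [hHdef] at this
      linarith
    calc fmin / 2 * t ^ 2 = ∫ s in (0:ℝ)..t, fmin * s := hval.symm
      _ ≤ ∫ s in (0:ℝ)..t, (F s - F 0) :=
          intervalIntegral.integral_mono_on h0t hint2 hint1 hmono
  · have hmono : ∀ s ∈ Set.Icc t (0:ℝ), F s - F 0 ≤ fmin * s := by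
      intro s hs
      have hs' : s ∈ Set.Icc (-R) R := ⟨le_trans hRt.1 hs.1, by linarith [hs.2]⟩
      have h0' : (0:ℝ) ∈ Set.Icc (-R) R := ⟨by linarith, hR0⟩
      have := hHmono hs' h0' hs.2
      rw [hH0] at this
      simp only [hHdef] at this
      linarith
    have hle : (∫ s in t..(0:ℝ), (F s - F 0)) ≤ ∫ s in t..(0:ℝ), fmin * s :=
      intervalIntegral.integral_mono_on h0t.le (hint1.symm) (hint2.symm) hmono
    have e1 : (∫ s in (0:ℝ)..t, (F s - F 0)) = -(∫ s in t..(0:ℝ), (F s - F 0)) :=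
      (intervalIntegral.integral_symm _ _)
    have e2 : (∫ s in (0:ℝ)..t, fmin * s) = -(∫ s in t..(0:ℝ), fmin * s) :=
      (intervalIntegral.integral_symm _ _)
    rw [← hval, e1, e2]
    linarith

/-- Positive-definite quadratic lower bound for the expected integrated CDF increment. -/
theorem expected_integrated_cdf_lower_bound {d : ℕ} {Ω : Type*} [MeasurableSpace Ω]
    (ℙ : Measure Ω) [IsProbabilityMeasure ℙ]
    (Z : Ω → EuclideanSpace ℝ (Fin d)) (F f : ℝ → ℝ) (fmin clam R : ℝ)
    (hfmin : 0 < fmin) (hclam : 0 < clam) (hR : 0 ≤ R)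
    (hF' : ∀ y, HasDerivAt F (f y) y)
    (hfR : ∀ y ∈ Set.Icc (-R) R, fmin ≤ f y)
    (heig : ∀ h' : EuclideanSpace ℝ (Fin d),
      clam * ‖h'‖ ^ 2 ≤ ∫ ω, (∑ j, Z ω j * h' j) ^ 2 ∂ℙ)
    (h : EuclideanSpace ℝ (Fin d))
    (hZ : ∀ᵐ ω ∂ℙ, |∑ j, Z ω j * h j| ≤ R)
    (hsq : Integrable (fun ω => (∑ j, Z ω j * h j) ^ 2) ℙ)
    (hint : Integrable (fun ω => ∫ s in (0:ℝ)..(∑ j, Z ω j * h j), (F s - F 0)) ℙ) :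
    fmin * clam / 2 * ‖h‖ ^ 2
      ≤ ∫ ω, (∫ s in (0:ℝ)..(∑ j, Z ω j * h j), (F s - F 0)) ∂ℙ := by
  have hae : ∀ᵐ ω ∂ℙ, fmin / 2 * (∑ j, Z ω j * h j) ^ 2
      ≤ ∫ s in (0:ℝ)..(∑ j, Z ω j * h j), (F s - F 0) := by
    filter_upwards [hZ] with ω hω
    exact key_pointwise F f fmin R _ hF' hfR hω
  have h1 : ∫ ω, fmin / 2 * (∑ j, Z ω j * h j) ^ 2 ∂ℙ
      ≤ ∫ ω, (∫ s in (0:ℝ)..(∑ j, Z ω j * h j), (F s - F 0)) ∂ℙ :=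
    integral_mono_ae (hsq.const_mul _) hint hae
  have h2 : (∫ ω, fmin / 2 * (∑ j, Z ω j * h j) ^ 2 ∂ℙ)
      = fmin / 2 * ∫ ω, (∑ j, Z ω j * h j) ^ 2 ∂ℙ :=
    integral_const_mul _ _
  have h3 := heig h
  have h4 : fmin * clam / 2 * ‖h‖ ^ 2 = fmin / 2 * (clam * ‖h‖ ^ 2) := by ring
  rw [h4]
  calc fmin / 2 * (clam * ‖h‖ ^ 2)
      ≤ fmin / 2 * ∫ ω, (∑ j, Z ω j * h j) ^ 2 ∂ℙ := by
        apply mul_le_mul_of_nonneg_left h3 (by linarith)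
    _ ≤ _ := by rw [← h2]; exact h1
end
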